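/- Let p, q be coprime positive integers such that p/q is not an even integer, set ρ = p/q, and let K : ℝ → ℂ be a continuous function with period πρ. Then for every τ0 ∈ ℝ, ∫₀^{2πp} K(τ) sin(τ + τ0) dτ = 0 and ∫₀^{2πp} K(τ) cos(τ + τ0) dτ = 0. -/

import Mathlib

open Real

private lemma sin_exp' (z : ℂ) : Complex.sin z =
    (Complex.exp (-z * Complex.I) - Complex.exp (z * Complex.I)) * Complex.I / 2 := rfl

private lemma cos_exp' (z : ℂ) : Complex.cos z =
    (Complex.exp (z * Complex.I) + Complex.exp (-z * Complex.I)) / 2 := rfl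

private lemma quasi_periodic_integral (K : ℝ → ℂ) (hK : Continuous K) (T : ℝ)
    (hKper : Function.Periodic K T) (z : ℂ) (n : ℕ) :
    ∫ τ in (0:ℝ)..(n * T), K τ * Complex.exp (z * τ) =
      (∑ j ∈ Finset.range n, Complex.exp (z * T) ^ j) *
        ∫ τ in (0:ℝ)..T, K τ * Complex.exp (z * τ) := by
  have hcont : ∀ a b : ℝ, IntervalIntegrable (fun τ : ℝ => K τ * Complex.exp (z * τ))
      MeasureTheory.volume a b := fun a b =>
    (hK.mul (Complex.continuous_exp.comp (continuous_const.mul Complex.continuous_ofReal))).intervalIntegrable a b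
  induction n with
  | zero => simp
  | succ n ih =>
    have hsplit : ∫ τ in (0:ℝ)..(((n:ℝ)+1) * T), K τ * Complex.exp (z * τ)
        = (∫ τ in (0:ℝ)..((n:ℝ)*T), K τ * Complex.exp (z * τ))
          + ∫ τ in ((n:ℝ)*T)..(((n:ℝ)+1)*T), K τ * Complex.exp (z * τ) :=
      (intervalIntegral.integral_add_adjacent_intervals (hcont _ _) (hcont _ _)).symm
    have hshift : ∫ τ in ((n:ℝ)*T)..(((n:ℝ)+1)*T), K τ * Complex.exp (z * τ)
        = Complex.exp (z * T) ^ n * ∫ τ in (0:ℝ)..T, K τ * Complex.exp (z * τ) := by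
      have h := intervalIntegral.integral_comp_add_right (a := (0:ℝ)) (b := T)
        (f := fun τ : ℝ => K τ * Complex.exp (z * τ)) ((n:ℝ)*T)
      rw [show ((n:ℝ)*T : ℝ) = 0 + (n:ℝ)*T by ring, show (((n:ℝ)+1)*T : ℝ) = T + (n:ℝ)*T by ring,
        ← h, ← intervalIntegral.integral_const_mul]
      apply intervalIntegral.integral_congr
      intro x hx
      have hKx : K (x + (n:ℝ)*T) = K x := (hKper.nat_mul n) x
      simp only [hKx]
      push_cast
      rw [mul_add, Complex.exp_add, ← Complex.exp_nat_mul]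
      ring
    push_cast
    rw [hsplit, ih, hshift, Finset.sum_range_succ]
    ring

/-- A continuous function of period `πρ`, `ρ = p/q` with `p/q` not an even
integer, integrates to zero against `sin(τ + τ0)` and `cos(τ + τ0)` over
`[0, 2πp]`. -/
theorem periodic_against_sin_cos_vanishes
    (p q : ℕ) (hp : 0 < p) (hq : 0 < q) (hpq : Nat.Coprime p q)
    (hnoteven : ¬ ∃ m : ℤ, (p : ℝ) / q = 2 * m)
    (K : ℝ → ℂ) (hK : Continuous K)
    (hKper : Function.Periodic K (π * ((p : ℝ) / q))) :
    ∀ τ0 : ℝ,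
      (∫ τ in (0:ℝ)..(2 * π * (p : ℝ)), K τ * (Real.sin (τ + τ0) : ℂ)) = 0 ∧
      (∫ τ in (0:ℝ)..(2 * π * (p : ℝ)), K τ * (Real.cos (τ + τ0) : ℂ)) = 0 := by
  intro τ0
  set T : ℝ := π * ((p : ℝ) / q) with hT
  have hqR : ((q:ℝ)) ≠ 0 := by positivity
  have hπ : (0:ℝ) < π := Real.pi_pos
  have hlen : (2 * π * (p : ℝ)) = ((2*q : ℕ) : ℝ) * T := by
    rw [hT]; push_cast; field_simp
  -- key vanishing for z = ±I
  have key : ∀ z : ℂ, (z = Complex.I ∨ z = -Complex.I) →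
      (∫ τ in (0:ℝ)..(2 * π * (p : ℝ)), K τ * Complex.exp (z * τ)) = 0 := by
    intro z hz
    rw [hlen, quasi_periodic_integral K hK T hKper z (2*q)]
    have hqC : ((q:ℂ)) ≠ 0 := by exact_mod_cast hqR
    have hc_ne : Complex.exp (z * T) ≠ 1 := by
      intro h1
      rw [Complex.exp_eq_one_iff] at h1
      obtain ⟨n, hn⟩ := h1
      apply hnoteven
      rcases hz with rfl | rfl
      · refine ⟨n, ?_⟩
        have : ((T:ℂ)) = (n:ℂ) * (2 * π) := by
          have hI : (Complex.I) ≠ 0 := Complex.I_ne_zero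
          have h3 : (T:ℂ) * Complex.I = ((n:ℂ) * (2 * π)) * Complex.I := by
            linear_combination hn
          exact mul_right_cancel₀ hI h3
        have hr : T = (n:ℝ) * (2 * π) := by exact_mod_cast this
        rw [hT] at hr
        field_simp at hr
        have h2 : (p:ℝ) = 2*n*q := mul_left_cancel₀ (ne_of_gt hπ) (by linear_combination π * hr)
        field_simp
        linear_combination h2
      · refine ⟨-n, ?_⟩
        have : ((T:ℂ)) = ((-n:ℤ):ℂ) * (2 * π) := by
          have hI : (Complex.I) ≠ 0 := Complex.I_ne_zero
          push_cast
          have := mul_right_cancel₀ hI (show (-(T:ℂ)) * Complex.I = ((n:ℂ) * (2*π)) * Complex.I by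
            linear_combination hn)
          linear_combination -this
        have hr : T = ((-n:ℤ):ℝ) * (2 * π) := by exact_mod_cast this
        rw [hT] at hr
        field_simp at hr
        push_cast at hr ⊢
        have h2 : (p:ℝ) = 2*(-n)*q := mul_left_cancel₀ (ne_of_gt hπ) (by linear_combination π * hr)
        field_simp
        linear_combination h2
    have hcpow : Complex.exp (z * T) ^ (2*q) = 1 := by
      rw [← Complex.exp_nat_mul]
      rcases hz with rfl | rfl
      · rw [show ((2*q:ℕ):ℂ) * (Complex.I * T) = (p:ℤ) * (2 * π * Complex.I) by
          push_cast [hT]; field_simp [hqC]]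
        exact Complex.exp_int_mul_two_pi_mul_I p
      · rw [show ((2*q:ℕ):ℂ) * (-Complex.I * T) = ((-p:ℤ)) * (2 * π * Complex.I) by
          push_cast [hT]; field_simp [hqC]]
        exact Complex.exp_int_mul_two_pi_mul_I (-p)
    rw [geom_sum_eq hc_ne, hcpow]
    simp
  have A := key Complex.I (Or.inl rfl)
  have B := key (-Complex.I) (Or.inr rfl)
  have hint : ∀ z : ℂ, IntervalIntegrable (fun τ : ℝ => K τ * Complex.exp (z * τ))
      MeasureTheory.volume 0 (2 * π * (p:ℝ)) := fun z =>
    (hK.mul (Complex.continuous_exp.comp (continuous_const.mul Complex.continuous_ofReal))).intervalIntegrable _ _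
  constructor
  · have hptw : ∀ τ ∈ Set.uIcc (0:ℝ) (2 * π * (p:ℝ)),
        K τ * (Real.sin (τ + τ0) : ℂ)
          = (Complex.exp (-(τ0:ℂ) * Complex.I) * Complex.I / 2) * (K τ * Complex.exp (-Complex.I * τ))
            + (-(Complex.exp ((τ0:ℂ) * Complex.I) * Complex.I / 2)) * (K τ * Complex.exp (Complex.I * τ)) := by
      intro τ _
      rw [Complex.ofReal_sin, sin_exp']
      push_cast
      rw [show (-((τ:ℂ) + τ0) * Complex.I) = -(τ0:ℂ) * Complex.I + -Complex.I * τ by ring,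
        show (((τ:ℂ) + τ0) * Complex.I) = (τ0:ℂ) * Complex.I + Complex.I * τ by ring,
        Complex.exp_add, Complex.exp_add]
      ring
    rw [intervalIntegral.integral_congr hptw,
      intervalIntegral.integral_add ((hint _).const_mul _) ((hint _).const_mul _),
      intervalIntegral.integral_const_mul, intervalIntegral.integral_const_mul, A, B]
    ring
  · have hptw : ∀ τ ∈ Set.uIcc (0:ℝ) (2 * π * (p:ℝ)),
        K τ * (Real.cos (τ + τ0) : ℂ)
          = (Complex.exp ((τ0:ℂ) * Complex.I) / 2) * (K τ * Complex.exp (Complex.I * τ))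
            + (Complex.exp (-(τ0:ℂ) * Complex.I) / 2) * (K τ * Complex.exp (-Complex.I * τ)) := by
      intro τ _
      rw [Complex.ofReal_cos, cos_exp']
      push_cast
      rw [show (-((τ:ℂ) + τ0) * Complex.I) = -(τ0:ℂ) * Complex.I + -Complex.I * τ by ring,
        show (((τ:ℂ) + τ0) * Complex.I) = (τ0:ℂ) * Complex.I + Complex.I * τ by ring,
        Complex.exp_add, Complex.exp_add]
      ring
    rw [intervalIntegral.integral_congr hptw,
      intervalIntegral.integral_add ((hint _).const_mul _) ((hint _).const_mul _),
      intervalIntegral.integral_const_mul, intervalIntegral.integral_const_mul, A, B]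
    ring
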